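/- Fix any μ ∈ ℝ^d and any d×d symmetric positive definite matrix Σ. Then for any μ₁, μ₂ ∈ ℝ^d, any d×d symmetric positive definite Σ₁, Σ₂, and any γ, ρ, τ > 0: (μ₁, Σ₁) ≈_{γ,ρ,τ} (μ₂, Σ₂) if and only if (Σ^{1/2}μ₁ + μ, Σ^{1/2}Σ₁Σ^{1/2}) ≈_{γ,ρ,τ} (Σ^{1/2}μ₂ + μ, Σ^{1/2}Σ₂Σ^{1/2}). -/

import Mathlib

open MeasureTheory ProbabilityTheory Matrix Real
open scoped ENNReal

noncomputable section

/-- The `ℓ²`-operator norm of a real `d × d` matrix. -/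
def opNorm {d : ℕ} (M : Matrix (Fin d) (Fin d) ℝ) : ℝ :=
  ‖(Matrix.toEuclideanCLM (𝕜 := ℝ) M)‖

/-- The Frobenius norm of a real `d × d` matrix. -/
def frobNorm {d : ℕ} (M : Matrix (Fin d) (Fin d) ℝ) : ℝ :=
  Real.sqrt (∑ i, ∑ j, (M i j) ^ 2)

/-- The Euclidean norm of a vector in `ℝ^d`. -/
def vnorm {d : ℕ} (v : Fin d → ℝ) : ℝ := Real.sqrt (∑ i, (v i) ^ 2)

/-- The positive semidefinite square root of a matrix (junk value `0` if the matrix is not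
positive semidefinite). -/
def msqrt {d : ℕ} (S : Matrix (Fin d) (Fin d) ℝ) : Matrix (Fin d) (Fin d) ℝ :=
  letI := Classical.propDecidable S.PosSemidef
  if h : S.PosSemidef then
    (h.1.eigenvectorUnitary : Matrix (Fin d) (Fin d) ℝ) *
      diagonal ((↑) ∘ (Real.sqrt ·) ∘ h.1.eigenvalues) *
      (star h.1.eigenvectorUnitary : Matrix (Fin d) (Fin d) ℝ)
  else 0

/-- `Σ^{-1/2}`, the inverse of the positive square root. -/
def sqrtInv {d : ℕ} (S : Matrix (Fin d) (Fin d) ℝ) : Matrix (Fin d) (Fin d) ℝ :=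
  (msqrt S)⁻¹

/-- `(μ̂, Σ̂) ≈_{γ,ρ,τ} (μ, Σ)`: spectral, Frobenius, and Mahalanobis closeness. -/
def approx {d : ℕ} (γ ρ τ : ℝ) (p q : (Fin d → ℝ) × Matrix (Fin d) (Fin d) ℝ) : Prop :=
  opNorm (sqrtInv q.2 * p.2 * sqrtInv q.2 - 1) ≤ γ ∧
  frobNorm (sqrtInv q.2 * p.2 * sqrtInv q.2 - 1) ≤ ρ ∧
  vnorm (sqrtInv q.2 *ᵥ (p.1 - q.1)) ≤ τ

section Aux

variable {d : ℕ}

lemma msqrt_eq {S : Matrix (Fin d) (Fin d) ℝ} (hS : S.PosSemidef) : msqrt S =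
    (hS.1.eigenvectorUnitary : Matrix (Fin d) (Fin d) ℝ) *
      diagonal ((↑) ∘ (Real.sqrt ·) ∘ hS.1.eigenvalues) *
      (star hS.1.eigenvectorUnitary : Matrix (Fin d) (Fin d) ℝ) := by
  rw [msqrt]; exact dif_pos hS

lemma msqrt_mul_self {S : Matrix (Fin d) (Fin d) ℝ} (hS : S.PosDef) :
    msqrt S * msqrt S = S := by
  have hpsd := hS.posSemidef
  rw [msqrt_eq hpsd]
  conv_rhs => rw [hpsd.1.spectral_theorem, Unitary.conjStarAlgAut_apply]
  have hU : (star hpsd.1.eigenvectorUnitary : Matrix (Fin d) (Fin d) ℝ) *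
      (hpsd.1.eigenvectorUnitary : Matrix (Fin d) (Fin d) ℝ) = 1 :=
    Unitary.coe_star_mul_self _
  have hD : diagonal (((↑) : ℝ → ℝ) ∘ (Real.sqrt ·) ∘ hpsd.1.eigenvalues) *
      diagonal (((↑) : ℝ → ℝ) ∘ (Real.sqrt ·) ∘ hpsd.1.eigenvalues) =
      diagonal (RCLike.ofReal ∘ hpsd.1.eigenvalues) := by
    rw [diagonal_mul_diagonal]; congr 1; funext i
    simp [Real.mul_self_sqrt (hpsd.eigenvalues_nonneg i)]
  calc _ = (hpsd.1.eigenvectorUnitary : Matrix (Fin d) (Fin d) ℝ) *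
        (diagonal (((↑) : ℝ → ℝ) ∘ (Real.sqrt ·) ∘ hpsd.1.eigenvalues) *
        ((star hpsd.1.eigenvectorUnitary : Matrix (Fin d) (Fin d) ℝ) *
        (hpsd.1.eigenvectorUnitary : Matrix (Fin d) (Fin d) ℝ)) *
        diagonal (((↑) : ℝ → ℝ) ∘ (Real.sqrt ·) ∘ hpsd.1.eigenvalues)) *
        (star hpsd.1.eigenvectorUnitary : Matrix (Fin d) (Fin d) ℝ) := by
          simp only [Matrix.mul_assoc]
    _ = _ := by rw [hU, Matrix.mul_one, hD]

lemma msqrt_herm {S : Matrix (Fin d) (Fin d) ℝ} (hS : S.PosDef) : (msqrt S)ᴴ = msqrt S := by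
  rw [msqrt_eq hS.posSemidef]
  simp [conjTranspose_mul, Matrix.mul_assoc, Unitary.coe_star, diagonal_conjTranspose,
    Matrix.star_eq_conjTranspose, Matrix.conjTranspose_eq_transpose_of_trivial]

lemma msqrt_isUnit {S : Matrix (Fin d) (Fin d) ℝ} (hS : S.PosDef) : IsUnit (msqrt S) := by
  rw [Matrix.isUnit_iff_isUnit_det, isUnit_iff_ne_zero]
  intro h
  have := hS.det_pos
  rw [← msqrt_mul_self hS, det_mul, h, mul_zero] at this
  exact lt_irrefl _ this

lemma opNorm_conj {O M : Matrix (Fin d) (Fin d) ℝ} (h1 : Oᴴ * O = 1) (h2 : O * Oᴴ = 1) :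
    opNorm (O * M * Oᴴ) = opNorm M := by
  have hmem : toEuclideanCLM (𝕜 := ℝ) O ∈ unitary _ := by
    rw [Unitary.mem_iff, ← map_star, ← _root_.map_mul, ← _root_.map_mul,
      Matrix.star_eq_conjTranspose, h1, h2]
    simp
  have hmem' : toEuclideanCLM (𝕜 := ℝ) Oᴴ ∈ unitary _ := by
    rw [Unitary.mem_iff, ← map_star, ← _root_.map_mul, ← _root_.map_mul,
      Matrix.star_eq_conjTranspose, conjTranspose_conjTranspose, h1, h2]
    simp
  rw [opNorm, opNorm, _root_.map_mul, _root_.map_mul,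
    CStarRing.norm_mul_mem_unitary _ hmem', CStarRing.norm_mem_unitary_mul _ hmem]

lemma frob_eq_trace {M : Matrix (Fin d) (Fin d) ℝ} :
    frobNorm M = Real.sqrt (Matrix.trace (Mᴴ * M)) := by
  rw [frobNorm, Matrix.trace]
  congr 1
  rw [Finset.sum_comm]
  simp [Matrix.mul_apply, Matrix.diag, sq]

lemma frobNorm_conj {O M : Matrix (Fin d) (Fin d) ℝ} (h1 : Oᴴ * O = 1) :
    frobNorm (O * M * Oᴴ) = frobNorm M := by
  rw [frob_eq_trace, frob_eq_trace]
  congr 1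
  have key : (O * M * Oᴴ)ᴴ * (O * M * Oᴴ) = O * (Mᴴ * M) * Oᴴ := by
    simp only [conjTranspose_mul, conjTranspose_conjTranspose]
    calc O * (Mᴴ * Oᴴ) * (O * M * Oᴴ)
        = O * (Mᴴ * ((Oᴴ * O) * M)) * Oᴴ := by
          simp only [Matrix.mul_assoc]
      _ = O * (Mᴴ * M) * Oᴴ := by rw [h1, Matrix.one_mul]
  rw [key, Matrix.trace_mul_cycle, ← Matrix.mul_assoc, h1, Matrix.one_mul]

lemma vnorm_conj {O : Matrix (Fin d) (Fin d) ℝ} (h1 : Oᴴ * O = 1) (w : Fin d → ℝ) :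
    vnorm (O *ᵥ w) = vnorm w := by
  have key : ∀ v : Fin d → ℝ, ∑ i, (v i) ^ 2 = v ⬝ᵥ v := by
    intro v; simp [dotProduct, sq]
  rw [vnorm, vnorm, key, key]
  have e : (O *ᵥ w) ⬝ᵥ (O *ᵥ w) = w ⬝ᵥ w := by
    rw [Matrix.dotProduct_mulVec, ← Matrix.mulVec_transpose, Matrix.mulVec_mulVec]
    have ht : Oᵀ = Oᴴ := by
      rw [← Matrix.conjTranspose_eq_transpose_of_trivial]
    rw [ht, h1, Matrix.one_mulVec]
  rw [e]

lemma posDef_conj {A R : Matrix (Fin d) (Fin d) ℝ} (hA : A.PosDef)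
    (hR : Rᴴ = R) (hRu : IsUnit R) : (R * A * R).PosDef := by
  refine PosDef.of_dotProduct_mulVec_pos ?_ ?_
  · show (R * A * R)ᴴ = R * A * R
    simp only [conjTranspose_mul, hR, hA.1.eq, Matrix.mul_assoc]
  · intro x hx
    have hRx : R *ᵥ x ≠ 0 := by
      intro h
      apply hx
      letI := hRu.invertible
      have hinj := Matrix.mulVec_injective_of_invertible R
      have h0 : R *ᵥ x = R *ᵥ 0 := by rw [h, Matrix.mulVec_zero]
      exact hinj h0
    have hpos := hA.dotProduct_mulVec_pos hRx
    have e : star x ⬝ᵥ ((R * A * R) *ᵥ x) = star (R *ᵥ x) ⬝ᵥ (A *ᵥ (R *ᵥ x)) := by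
      have hRt : Rᵀ = R := by rwa [← Matrix.conjTranspose_eq_transpose_of_trivial]
      simp only [star_trivial, ← Matrix.mulVec_mulVec]
      rw [Matrix.dotProduct_mulVec x R, ← Matrix.mulVec_transpose, hRt]
    rw [e]
    exact hpos

end Aux

/-- Lemma: the relation `≈_{γ,ρ,τ}` is invariant under the affine rescaling
`(ν, Λ) ↦ (Σ^{1/2} ν + μ, Σ^{1/2} Λ Σ^{1/2})`. -/
theorem approx_invariant_under_scaling {d : ℕ} (μ : Fin d → ℝ)
    (S : Matrix (Fin d) (Fin d) ℝ) (hS : S.PosDef)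
    (μ₁ μ₂ : Fin d → ℝ) (S₁ S₂ : Matrix (Fin d) (Fin d) ℝ)
    (h₁ : S₁.PosDef) (h₂ : S₂.PosDef)
    (γ ρ τ : ℝ) (hγ : 0 < γ) (hρ : 0 < ρ) (hτ : 0 < τ) :
    approx γ ρ τ (μ₁, S₁) (μ₂, S₂) ↔
      approx γ ρ τ (msqrt S *ᵥ μ₁ + μ, msqrt S * S₁ * msqrt S)
        (msqrt S *ᵥ μ₂ + μ, msqrt S * S₂ * msqrt S) := by
  set R := msqrt S with hRdef
  set B := msqrt S₂ with hBdef
  have hRS2 : (R * S₂ * R).PosDef := posDef_conj h₂ (msqrt_herm hS) (msqrt_isUnit hS)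
  set T := msqrt (R * S₂ * R) with hTdef
  have hBB : B * B = S₂ := msqrt_mul_self h₂
  have hRR : R * R = S := msqrt_mul_self hS
  have hTT : T * T = R * S₂ * R := msqrt_mul_self hRS2
  have hBh : Bᴴ = B := msqrt_herm h₂
  have hRh : Rᴴ = R := msqrt_herm hS
  have hTh : Tᴴ = T := msqrt_herm hRS2
  have hBu : IsUnit B.det := (Matrix.isUnit_iff_isUnit_det _).mp (msqrt_isUnit h₂)
  have hTu : IsUnit T.det := (Matrix.isUnit_iff_isUnit_det _).mp (msqrt_isUnit hRS2)
  have hBQ : B * B⁻¹ = 1 := Matrix.mul_nonsing_inv B hBu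
  have hQB : B⁻¹ * B = 1 := Matrix.nonsing_inv_mul B hBu
  have hTQ : T * T⁻¹ = 1 := Matrix.mul_nonsing_inv T hTu
  have hQT : T⁻¹ * T = 1 := Matrix.nonsing_inv_mul T hTu
  set O := T⁻¹ * R * B with hOdef
  have hOc : Oᴴ = B * R * T⁻¹ := by
    rw [hOdef]
    simp only [conjTranspose_mul, hBh, hRh, Matrix.conjTranspose_nonsing_inv, hTh,
      Matrix.mul_assoc]
  have hOOh : O * Oᴴ = 1 := by
    rw [hOc, hOdef]
    calc T⁻¹ * R * B * (B * R * T⁻¹)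
        = T⁻¹ * (R * (B * B) * R) * T⁻¹ := by noncomm_ring
      _ = T⁻¹ * (T * T) * T⁻¹ := by rw [hBB, hTT]
      _ = (T⁻¹ * T) * (T * T⁻¹) := by noncomm_ring
      _ = 1 := by rw [hQT, hTQ, Matrix.one_mul]
  have hOhO : Oᴴ * O = 1 := mul_eq_one_comm.mp hOOh
  -- matrix identity
  have hsqrtInv2 : sqrtInv S₂ = B⁻¹ := rfl
  have hsqrtInvT : sqrtInv (R * S₂ * R) = T⁻¹ := rfl
  have ematrix : sqrtInv (R * S₂ * R) * (R * S₁ * R) * sqrtInv (R * S₂ * R)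
      = O * (sqrtInv S₂ * S₁ * sqrtInv S₂) * Oᴴ := by
    rw [hsqrtInv2, hsqrtInvT, hOc, hOdef]
    calc T⁻¹ * (R * S₁ * R) * T⁻¹
        = T⁻¹ * (R * ((B * B⁻¹) * S₁ * (B⁻¹ * B)) * R) * T⁻¹ := by
          rw [hBQ, hQB]; noncomm_ring
      _ = T⁻¹ * R * B * (B⁻¹ * S₁ * B⁻¹) * (B * R * T⁻¹) := by noncomm_ring
  have ematrix' : sqrtInv (R * S₂ * R) * (R * S₁ * R) * sqrtInv (R * S₂ * R) - 1
      = O * (sqrtInv S₂ * S₁ * sqrtInv S₂ - 1) * Oᴴ := by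
    rw [Matrix.mul_sub, Matrix.sub_mul, Matrix.mul_one, hOOh, ← ematrix]
  -- vector identity
  have evec : sqrtInv (R * S₂ * R) *ᵥ ((R *ᵥ μ₁ + μ) - (R *ᵥ μ₂ + μ))
      = O *ᵥ (sqrtInv S₂ *ᵥ (μ₁ - μ₂)) := by
    rw [hsqrtInv2, hsqrtInvT, hOdef]
    have e1 : (R *ᵥ μ₁ + μ) - (R *ᵥ μ₂ + μ) = R *ᵥ (μ₁ - μ₂) := by
      rw [Matrix.mulVec_sub]; abel
    rw [e1, Matrix.mulVec_mulVec, Matrix.mulVec_mulVec,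
      show T⁻¹ * R * B * B⁻¹ = T⁻¹ * R by
        calc T⁻¹ * R * B * B⁻¹ = T⁻¹ * R * (B * B⁻¹) := by noncomm_ring
          _ = T⁻¹ * R := by rw [hBQ, Matrix.mul_one]]

  unfold approx
  simp only at *
  rw [ematrix', evec, opNorm_conj hOhO hOOh, frobNorm_conj hOhO, vnorm_conj hOhO]
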